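/- For r ≥ 5, (3/4)^r < 1/4. Consequently, the r-uniform 'edge-star' S_r^{(r)} — an edge F_0 = {v_1,…,v_r} with an additional edge F_i attached at each v_i (F_i pairwise disjoint outside F_0) — admits a strictly 1/4-supernormal labeling (B(v_i,F_i)=1/4, B(v_i,F_0)=3/4, leaves 1), hence ρ(S_r^{(r)}) > (r−1)!·4^{1/r} for r ≥ 5. -/

import Mathlib

open Finset

/-- Spectral radius of an `r`-uniform hypergraph with edge set `E`. -/
noncomputable def specRad (r : ℕ) {V : Type} [Fintype V] (E : Finset (Finset V)) : ℝ :=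
  sSup {ρ : ℝ | ∃ x : V → ℝ, (∀ v, 0 ≤ x v) ∧ x ≠ 0 ∧
    ρ = (Nat.factorial r : ℝ) * (∑ e ∈ E, ∏ v ∈ e, x v) / (∑ v, x v ^ r)}

/-- for `r ≥ 5` we have `(3/4)^r < 1/4`; consequently the `r`-uniform
edge-star `S_r^{(r)}` admits a strictly 1/4-supernormal labeling and its spectral
radius exceeds `(r−1)!·4^{1/r}`. -/
theorem edgeStar_strictly_supernormal (r N : ℕ) (hr : 5 ≤ r)
    (v : Fin r → Fin N) (hv : Function.Injective v)
    (F : Fin r → Finset (Fin N))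
    (hcard : ∀ i, (F i).card = r)
    (hvF : ∀ i, Finset.image v Finset.univ ∩ F i = {v i})
    (hFF : ∀ i j, i ≠ j → F i ∩ F j = ∅)
    (E : Finset (Finset (Fin N)))
    (hE : E = insert (Finset.image v Finset.univ) (Finset.image F Finset.univ))
    (hcov : ∀ w : Fin N, ∃ f ∈ E, w ∈ f) :
    ((3/4 : ℝ)) ^ r < 1/4 ∧
    (∃ B : Fin N → Finset (Fin N) → ℝ,
      (∀ w f, f ∈ E → w ∈ f → 0 < B w f) ∧
      (∀ w f, w ∉ f → B w f = 0) ∧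
      (∀ w : Fin N, ∑ f ∈ E.filter (fun f => w ∈ f), B w f = 1) ∧
      (∀ f ∈ E, ∏ w ∈ f, B w f ≤ 1/4) ∧
      (∃ f ∈ E, ∏ w ∈ f, B w f < 1/4)) ∧
    (Nat.factorial (r - 1) : ℝ) * (4 : ℝ) ^ ((1 : ℝ) / r) < specRad r E := by
  have hr0 : 0 < r := by omega
  set F0 : Finset (Fin N) := Finset.image v Finset.univ with hF0def
  -- part 1
  have part1 : ((3/4 : ℝ)) ^ r < 1/4 := by
    calc ((3/4 : ℝ)) ^ r ≤ (3/4 : ℝ) ^ 5 :=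
          pow_le_pow_of_le_one (by norm_num) (by norm_num) hr
      _ < 1/4 := by norm_num
  -- basic structural facts
  have hF0card : F0.card = r := by
    rw [hF0def, Finset.card_image_of_injective _ hv, Finset.card_univ, Fintype.card_fin]
  have hviF0 : ∀ i, v i ∈ F0 := fun i => Finset.mem_image_of_mem v (Finset.mem_univ i)
  have hviFi : ∀ i, v i ∈ F i := by
    intro i
    have : v i ∈ F0 ∩ F i := by rw [hvF i]; exact Finset.mem_singleton_self _
    exact (Finset.mem_inter.mp this).2
  have hF0ne : ∀ i, F0 ≠ F i := by
    intro i h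
    have h1 : F0 ∩ F i = F0 := by rw [h, Finset.inter_self]
    have h2 : F0.card = 1 := by
      rw [← h1, hvF i, Finset.card_singleton]
    omega
  have hmemFi : ∀ i w, w ∈ F i → w ≠ v i → w ∉ F0 := by
    intro i w hw hne hmem
    have : w ∈ F0 ∩ F i := Finset.mem_inter.mpr ⟨hmem, hw⟩
    rw [hvF i] at this
    exact hne (Finset.mem_singleton.mp this)
  have hviFj : ∀ i j, v i ∈ F j → i = j := by
    intro i j h
    have : v i ∈ F0 ∩ F j := Finset.mem_inter.mpr ⟨hviF0 i, h⟩
    rw [hvF j] at this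
    exact hv (Finset.mem_singleton.mp this)
  have hFinj : ∀ i ∈ (Finset.univ : Finset (Fin r)), ∀ j ∈ Finset.univ, F i = F j → i = j := by
    intro i _ j _ h
    by_contra hne
    have := hFF i j hne
    rw [h, Finset.inter_self] at this
    have : (F j).card = 0 := by rw [this, Finset.card_empty]
    rw [hcard j] at this; omega
  have hF0notim : F0 ∉ Finset.image F Finset.univ := by
    intro h
    obtain ⟨i, _, hi⟩ := Finset.mem_image.mp h
    exact hF0ne i hi.symm
  have hF0E : F0 ∈ E := by rw [hE]; exact Finset.mem_insert_self _ _
  have hFiE : ∀ i, F i ∈ E := by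
    intro i; rw [hE]
    exact Finset.mem_insert_of_mem (Finset.mem_image_of_mem F (Finset.mem_univ i))
  have hEmem : ∀ f ∈ E, f = F0 ∨ ∃ i, f = F i := by
    intro f hf
    rw [hE] at hf
    rcases Finset.mem_insert.mp hf with h | h
    · exact Or.inl h
    · obtain ⟨i, _, hi⟩ := Finset.mem_image.mp h
      exact Or.inr ⟨i, hi.symm⟩
  -- the labeling B
  set B : Fin N → Finset (Fin N) → ℝ := fun w f =>
    if w ∈ f then (if f = F0 then 3/4 else if w ∈ F0 then 1/4 else 1) else 0 with hBdef
  have hBpos : ∀ w f, f ∈ E → w ∈ f → 0 < B w f := by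
    intro w f _ hw
    simp only [hBdef, if_pos hw]
    split_ifs <;> norm_num
  have hBzero : ∀ w f, w ∉ f → B w f = 0 := by
    intro w f hw; simp only [hBdef, if_neg hw]
  have hsum : ∀ w : Fin N, ∑ f ∈ E.filter (fun f => w ∈ f), B w f = 1 := by
    intro w
    have h1 : ∑ f ∈ E.filter (fun f => w ∈ f), B w f = ∑ f ∈ E, B w f := by
      rw [Finset.sum_filter]
      refine Finset.sum_congr rfl fun f _ => ?_
      by_cases hw : w ∈ f
      · rw [if_pos hw]
      · rw [if_neg hw, hBzero w f hw]
    rw [h1, hE, Finset.sum_insert hF0notim, Finset.sum_image hFinj]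
    by_cases hw : w ∈ F0
    · obtain ⟨i, _, hi⟩ := Finset.mem_image.mp hw
      subst hi
      have hB0 : B (v i) F0 = 3/4 := by
        simp only [hBdef, if_pos (hviF0 i), if_pos rfl]
        norm_num
      have hBi : ∑ j ∈ Finset.univ, B (v i) (F j) = 1/4 := by
        rw [Finset.sum_eq_single i]
        · simp only [hBdef, if_pos (hviFi i), if_neg (Ne.symm (hF0ne i)),
            if_pos (hviF0 i)]
        · intro j _ hji
          apply hBzero
          intro hmem
          exact hji (hviFj i j hmem).symm
        · intro h; exact absurd (Finset.mem_univ i) h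
      rw [hB0, hBi]; norm_num
    · have hB0 : B w F0 = 0 := hBzero w F0 hw
      obtain ⟨f, hfE, hwf⟩ := hcov w
      rcases hEmem f hfE with h | ⟨i, h⟩
      · exact absurd (h ▸ hwf) hw
      subst h
      have hBi : ∑ j ∈ Finset.univ, B w (F j) = 1 := by
        rw [Finset.sum_eq_single i]
        · simp only [hBdef, if_pos hwf, if_neg (Ne.symm (hF0ne i)), if_neg hw]
        · intro j _ hji
          apply hBzero
          intro hmem
          have : w ∈ F i ∩ F j := Finset.mem_inter.mpr ⟨hwf, hmem⟩
          rw [hFF i j (Ne.symm hji)] at this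
          exact absurd this (Finset.notMem_empty w)
        · intro h; exact absurd (Finset.mem_univ i) h
      rw [hB0, hBi]; norm_num
  have hprodF0 : ∏ w ∈ F0, B w F0 = (3/4 : ℝ) ^ r := by
    have : ∀ w ∈ F0, B w F0 = (3/4 : ℝ) := by
      intro w hw
      simp only [hBdef, if_pos hw, if_pos rfl]
      norm_num
    rw [Finset.prod_congr rfl this, Finset.prod_const, hF0card]
  have hprodFi : ∀ i, ∏ w ∈ F i, B w (F i) = (1/4 : ℝ) := by
    intro i
    rw [← Finset.mul_prod_erase _ _ (hviFi i)]
    have h1 : B (v i) (F i) = 1/4 := by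
      simp only [hBdef, if_pos (hviFi i), if_neg (Ne.symm (hF0ne i)), if_pos (hviF0 i)]
    have h2 : ∏ w ∈ (F i).erase (v i), B w (F i) = 1 := by
      apply Finset.prod_eq_one
      intro w hw
      have hne := Finset.ne_of_mem_erase hw
      have hmem := Finset.mem_of_mem_erase hw
      simp only [hBdef, if_pos hmem, if_neg (Ne.symm (hF0ne i)),
        if_neg (hmemFi i w hmem hne)]
    rw [h1, h2, mul_one]
  have part2 : (∃ B : Fin N → Finset (Fin N) → ℝ,
      (∀ w f, f ∈ E → w ∈ f → 0 < B w f) ∧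
      (∀ w f, w ∉ f → B w f = 0) ∧
      (∀ w : Fin N, ∑ f ∈ E.filter (fun f => w ∈ f), B w f = 1) ∧
      (∀ f ∈ E, ∏ w ∈ f, B w f ≤ 1/4) ∧
      (∃ f ∈ E, ∏ w ∈ f, B w f < 1/4)) := by
    refine ⟨B, hBpos, hBzero, hsum, ?_, ⟨F0, hF0E, by rw [hprodF0]; exact part1⟩⟩
    intro f hf
    rcases hEmem f hf with h | ⟨i, h⟩
    · subst h; rw [hprodF0]; exact le_of_lt part1
    · subst h; rw [hprodFi]
  -- part 3: spectral radius
  refine ⟨part1, part2, ?_⟩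
  set c : ℝ := (4:ℝ) ^ ((1:ℝ)/r) with hcdef
  have hrR : (5:ℝ) ≤ (r:ℝ) := by exact_mod_cast hr
  have hc0 : 0 < c := Real.rpow_pos_of_pos (by norm_num) _
  have hcr : c ^ r = 4 := by
    rw [hcdef, ← Real.rpow_natCast ((4:ℝ) ^ ((1:ℝ)/r)) r, ← Real.rpow_mul (by norm_num)]
    rw [one_div, inv_mul_cancel₀ (show (r:ℝ) ≠ 0 by positivity), Real.rpow_one]
  have h43 : (4:ℝ) < (4/3)^r := by
    have hkey : (4/3:ℝ)^r * (3/4)^r = 1 := by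
      rw [← mul_pow]; norm_num
    have hX : (0:ℝ) < (4/3:ℝ)^r := by positivity
    nlinarith [mul_lt_mul_of_pos_left part1 hX]
  have hc43 : c < 4/3 := by
    refine lt_of_pow_lt_pow_left₀ r (by norm_num) ?_
    rw [hcr]; exact h43
  set x : Fin N → ℝ := fun w => if w ∈ F0 then c else 1 with hxdef
  have hx0 : ∀ w, 0 ≤ x w := by
    intro w; simp only [hxdef]; split_ifs
    · exact le_of_lt hc0
    · norm_num
  have i0 : Fin r := ⟨0, hr0⟩
  have hxne : x ≠ 0 := by
    intro h
    have h1 : x (v i0) = 0 := by rw [h]; rfl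
    have h2 : x (v i0) = c := by
      simp only [hxdef, if_pos (hviF0 i0)]
    rw [h2] at h1
    exact hc0.ne' h1
  -- the denominator
  have hpair : Set.PairwiseDisjoint (↑(Finset.univ : Finset (Fin r)))
      (fun i => (F i).erase (v i)) := by
    intro i _ j _ hij
    refine Finset.disjoint_left.mpr fun w hwi hwj => ?_
    have hmem : w ∈ F i ∩ F j :=
      Finset.mem_inter.mpr ⟨Finset.mem_of_mem_erase hwi, Finset.mem_of_mem_erase hwj⟩
    rw [hFF i j hij] at hmem
    exact absurd hmem (Finset.notMem_empty w)
  have hdisj : Disjoint F0 (Finset.univ.biUnion (fun i => (F i).erase (v i))) := by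
    refine Finset.disjoint_left.mpr fun w hw hmem => ?_
    obtain ⟨i, _, hi⟩ := Finset.mem_biUnion.mp hmem
    exact hmemFi i w (Finset.mem_of_mem_erase hi) (Finset.ne_of_mem_erase hi) hw
  have hunion : (Finset.univ : Finset (Fin N)) =
      F0 ∪ Finset.univ.biUnion (fun i => (F i).erase (v i)) := by
    ext w
    simp only [Finset.mem_univ, true_iff, Finset.mem_union, Finset.mem_biUnion]
    by_cases hw : w ∈ F0
    · exact Or.inl hw
    · obtain ⟨f, hfE, hwf⟩ := hcov w
      rcases hEmem f hfE with h | ⟨i, h⟩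
      · exact absurd (h ▸ hwf) hw
      · subst h
        refine Or.inr ⟨i, trivial, Finset.mem_erase.mpr ⟨?_, hwf⟩⟩
        intro heq
        exact hw (heq ▸ hviF0 i)
  have hsumD : ∑ w, x w ^ r = 4 * (r:ℝ) + (r:ℝ) * ((r:ℝ) - 1) := by
    rw [show (∑ w, x w ^ r) = ∑ w ∈ F0 ∪ Finset.univ.biUnion
        (fun i => (F i).erase (v i)), x w ^ r by rw [← hunion],
      Finset.sum_union hdisj, Finset.sum_biUnion hpair]
    have h1 : ∑ w ∈ F0, x w ^ r = 4 * (r:ℝ) := by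
      have : ∀ w ∈ F0, x w ^ r = (4:ℝ) := by
        intro w hw
        rw [hxdef]; simp only [if_pos hw]; exact hcr
      rw [Finset.sum_congr rfl this, Finset.sum_const, hF0card, nsmul_eq_mul, mul_comm]
    have h2 : ∀ i ∈ (Finset.univ : Finset (Fin r)),
        ∑ w ∈ (F i).erase (v i), x w ^ r = ((r:ℝ) - 1) := by
      intro i _
      have hterm : ∀ w ∈ (F i).erase (v i), x w ^ r = (1:ℝ) := by
        intro w hw
        rw [hxdef]
        simp only [if_neg (hmemFi i w (Finset.mem_of_mem_erase hw)
          (Finset.ne_of_mem_erase hw))]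
        exact one_pow r
      rw [Finset.sum_congr rfl hterm, Finset.sum_const, nsmul_eq_mul, mul_one,
        Finset.card_erase_of_mem (hviFi i), hcard i, Nat.cast_sub hr0, Nat.cast_one]
    rw [h1, Finset.sum_congr rfl h2, Finset.sum_const, Finset.card_univ,
      Fintype.card_fin, nsmul_eq_mul]
  -- the numerator
  have hnum : ∑ e ∈ E, ∏ w ∈ e, x w = 4 + (r:ℝ) * c := by
    rw [hE, Finset.sum_insert hF0notim, Finset.sum_image hFinj]
    have h1 : ∏ w ∈ F0, x w = (4:ℝ) := by
      have : ∀ w ∈ F0, x w = c := by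
        intro w hw; rw [hxdef]; simp only [if_pos hw]
      rw [Finset.prod_congr rfl this, Finset.prod_const, hF0card, hcr]
    have h2 : ∀ i ∈ (Finset.univ : Finset (Fin r)), ∏ w ∈ F i, x w = c := by
      intro i _
      rw [← Finset.mul_prod_erase _ _ (hviFi i)]
      have hv1 : x (v i) = c := by rw [hxdef]; simp only [if_pos (hviF0 i)]
      have he1 : ∏ w ∈ (F i).erase (v i), x w = 1 := by
        apply Finset.prod_eq_one
        intro w hw
        rw [hxdef]
        simp only [if_neg (hmemFi i w (Finset.mem_of_mem_erase hw)
          (Finset.ne_of_mem_erase hw))]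
      rw [hv1, he1, mul_one]
    rw [h1, Finset.sum_congr rfl h2, Finset.sum_const, Finset.card_univ,
      Fintype.card_fin, nsmul_eq_mul]
  have hDpos : (0:ℝ) < 4 * (r:ℝ) + (r:ℝ) * ((r:ℝ) - 1) := by nlinarith
  -- the witness value is in the set
  have hmem : ((r.factorial : ℝ) * (4 + (r:ℝ) * c) / (4 * (r:ℝ) + (r:ℝ) * ((r:ℝ) - 1)))
      ∈ {ρ : ℝ | ∃ x : Fin N → ℝ, (∀ v, 0 ≤ x v) ∧ x ≠ 0 ∧
        ρ = (Nat.factorial r : ℝ) * (∑ e ∈ E, ∏ w ∈ e, x w) / (∑ w, x w ^ r)} :=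
    ⟨x, hx0, hxne, by rw [hnum, hsumD]⟩
  -- bounded above
  have hbdd : BddAbove {ρ : ℝ | ∃ x : Fin N → ℝ, (∀ v, 0 ≤ x v) ∧ x ≠ 0 ∧
      ρ = (Nat.factorial r : ℝ) * (∑ e ∈ E, ∏ w ∈ e, x w) / (∑ w, x w ^ r)} := by
    refine ⟨(r.factorial : ℝ) * E.card, fun ρ hρ => ?_⟩
    obtain ⟨y, hy0, hyne, hρeq⟩ := hρ
    have hD0 : 0 < ∑ w, y w ^ r := by
      obtain ⟨w, hw⟩ := Function.ne_iff.mp hyne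
      exact Finset.sum_pos' (fun u _ => pow_nonneg (hy0 u) r)
        ⟨w, Finset.mem_univ w, pow_pos (lt_of_le_of_ne (hy0 w) (Ne.symm hw)) r⟩
    have hcardE : ∀ e ∈ E, e.card = r := by
      intro e he
      rcases hEmem e he with h | ⟨i, h⟩
      · rw [h, hF0card]
      · rw [h, hcard i]
    have hle : ∀ e ∈ E, ∏ u ∈ e, y u ≤ ∑ w, y w ^ r := by
      intro e he
      have hne : e.Nonempty := Finset.card_pos.mp (by rw [hcardE e he]; omega)
      obtain ⟨u, hu, humax⟩ := Finset.exists_max_image e y hne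
      calc ∏ w ∈ e, y w ≤ ∏ w ∈ e, y u :=
            Finset.prod_le_prod (fun w _ => hy0 w) (fun w hw => humax w hw)
        _ = y u ^ e.card := Finset.prod_const _
        _ = y u ^ r := by rw [hcardE e he]
        _ ≤ ∑ w, y w ^ r :=
            Finset.single_le_sum (fun w _ => pow_nonneg (hy0 w) r) (Finset.mem_univ u)
    have hNle : ∑ e ∈ E, ∏ w ∈ e, y w ≤ (E.card : ℝ) * (∑ w, y w ^ r) := by
      calc ∑ e ∈ E, ∏ w ∈ e, y w ≤ ∑ _e ∈ E, (∑ w, y w ^ r) :=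
            Finset.sum_le_sum hle
        _ = (E.card : ℝ) * (∑ w, y w ^ r) := by
            rw [Finset.sum_const, nsmul_eq_mul]
    rw [hρeq, div_le_iff₀ hD0]
    calc (r.factorial : ℝ) * (∑ e ∈ E, ∏ w ∈ e, y w)
        ≤ (r.factorial : ℝ) * ((E.card : ℝ) * (∑ w, y w ^ r)) :=
          mul_le_mul_of_nonneg_left hNle (by positivity)
      _ = (r.factorial : ℝ) * (E.card : ℝ) * (∑ w, y w ^ r) := by ring
  -- compare with the target bound
  have hfact : (r.factorial : ℝ) = (r:ℝ) * ((r-1).factorial : ℝ) := by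
    rw [← Nat.mul_factorial_pred hr0.ne']; push_cast; ring
  have hKpos : (0:ℝ) < ((r-1).factorial : ℝ) := by positivity
  have hlt : ((r-1).factorial : ℝ) * c <
      (r.factorial : ℝ) * (4 + (r:ℝ) * c) / (4 * (r:ℝ) + (r:ℝ) * ((r:ℝ) - 1)) := by
    rw [lt_div_iff₀ hDpos, hfact]
    have h4c : (0:ℝ) < 4 - 3 * c := by nlinarith
    nlinarith [mul_pos (mul_pos hKpos (show (0:ℝ) < (r:ℝ) by nlinarith)) h4c]
  calc ((r-1).factorial : ℝ) * c <
      (r.factorial : ℝ) * (4 + (r:ℝ) * c) / (4 * (r:ℝ) + (r:ℝ) * ((r:ℝ) - 1)) := hlt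
    _ ≤ specRad r E := le_csSup hbdd hmem
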